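/- If a0 lies in the interior of the Newton polytope P, then the set U₋ = {x ∈ ℝ^m : Ψ(x) < 1} is a nonempty open subset of ℝ^m. -/

import Mathlib

open scoped BigOperators RealInnerProductSpace
open Finset

noncomputable section

/-- `ℝ^m` with the standard (Euclidean) inner product. -/
abbrev Vm (m : ℕ) := EuclideanSpace ℝ (Fin m)

/-- The diagonal covariance `K(x) = Σ_{a∈A} α_a² exp(2⟨a,x⟩)`. -/
def covK {m : ℕ} (A : Finset (Vm m)) (α : Vm m → ℝ) (x : Vm m) : ℝ :=
  ∑ a ∈ A, (α a) ^ 2 * Real.exp (2 * ⟪a, x⟫)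

/-- The potential `Φ(x) = (1/2) log K(x)`. -/
def pot {m : ℕ} (A : Finset (Vm m)) (α : Vm m → ℝ) (x : Vm m) : ℝ :=
  (1 / 2) * Real.log (covK A α x)

/-- The weights `λ_a(x) = α_a² exp(2⟨a,x⟩)/K(x)`. -/
def wt {m : ℕ} (A : Finset (Vm m)) (α : Vm m → ℝ) (a x : Vm m) : ℝ :=
  (α a) ^ 2 * Real.exp (2 * ⟪a, x⟫) / covK A α x

/-- The moment map `μ(x) = Σ_{a∈A} λ_a(x) • a`. -/
def mmap {m : ℕ} (A : Finset (Vm m)) (α : Vm m → ℝ) (x : Vm m) : Vm m :=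
  ∑ a ∈ A, wt A α a x • a

/-- The Adler–Taylor quadratic form `g_x(v) = Σ_{a∈A} λ_a(x)·⟨a − μ(x), v⟩²`. -/
def atForm {m : ℕ} (A : Finset (Vm m)) (α : Vm m → ℝ) (x v : Vm m) : ℝ :=
  ∑ a ∈ A, wt A α a x * ⟪a - mmap A α x, v⟫ ^ 2


/-- The matrix `G(x) = Σ_{a∈A} λ_a(x)·(a − μ(x))(a − μ(x))ᵀ`. -/
def Gmat {m : ℕ} (A : Finset (Vm m)) (α : Vm m → ℝ) (x : Vm m) :
    Matrix (Fin m) (Fin m) ℝ :=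
  Matrix.of fun i j => ∑ a ∈ A, wt A α a x * ((a - mmap A α x) i * (a - mmap A α x) j)

/-- The quantity `⟨μ(x) − a0, G(x)⁻¹(μ(x) − a0)⟩`. -/
def qform {m : ℕ} (A : Finset (Vm m)) (α : Vm m → ℝ) (a0 : Vm m) (x : Vm m) : ℝ :=
  dotProduct (fun i => (mmap A α x - a0) i)
    ((Gmat A α x)⁻¹.mulVec fun i => (mmap A α x - a0) i)

/-- `f0(x) = α0·exp(⟨a0,x⟩)`. -/
def f0e {m : ℕ} (a0 : Vm m) (α0 : ℝ) (x : Vm m) : ℝ := α0 * Real.exp ⟪a0, x⟫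

/-- `K0(x) = K(x) + f0(x)²`. -/
def K0e {m : ℕ} (A : Finset (Vm m)) (α : Vm m → ℝ) (a0 : Vm m) (α0 : ℝ) (x : Vm m) : ℝ :=
  covK A α x + f0e a0 α0 x ^ 2

/-- `Φ0(x) = Φ(x) − log f0(x)`. -/
def Phi0e {m : ℕ} (A : Finset (Vm m)) (α : Vm m → ℝ) (a0 : Vm m) (α0 : ℝ) (x : Vm m) : ℝ :=
  pot A α x - Real.log (f0e a0 α0 x)

/-- `Ψ(x) = (K(x)/K0(x))^{m/2}·sqrt(1 + (f0(x)²/K0(x))·⟨μ(x) − a0, G(x)⁻¹(μ(x) − a0)⟩)`. -/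
def PsiF {m : ℕ} (A : Finset (Vm m)) (α : Vm m → ℝ) (a0 : Vm m) (α0 : ℝ) (x : Vm m) : ℝ :=
  (covK A α x / K0e A α a0 α0 x) ^ ((m : ℝ) / 2) *
    Real.sqrt (1 + (f0e a0 α0 x ^ 2 / K0e A α a0 α0 x) * qform A α a0 x)

variable {m : ℕ} {A : Finset (Vm m)} {α : Vm m → ℝ} {a0 : Vm m} {α0 : ℝ}

theorem real_inner_sum_coords (x y : Vm m) : ⟪x, y⟫ = ∑ i, x i * y i := by
  simp [PiLp.inner_apply, RCLike.inner_apply, conj_trivial]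
  exact Finset.sum_congr rfl fun _ _ => mul_comm _ _

theorem covK_pos (hA : A.Nonempty) (hα : ∀ a ∈ A, 0 < α a) (x : Vm m) :
    0 < covK A α x :=
  Finset.sum_pos (fun a ha => mul_pos (pow_pos (hα a ha) 2) (Real.exp_pos _)) hA

theorem wt_pos (hA : A.Nonempty) (hα : ∀ a ∈ A, 0 < α a) {a : Vm m} (ha : a ∈ A) (x : Vm m) :
    0 < wt A α a x :=
  div_pos (mul_pos (pow_pos (hα a ha) 2) (Real.exp_pos _)) (covK_pos hA hα x)

theorem f0e_pos (hα0 : 0 < α0) (x : Vm m) : 0 < f0e a0 α0 x :=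
  mul_pos hα0 (Real.exp_pos _)

theorem K0e_pos (hA : A.Nonempty) (hα : ∀ a ∈ A, 0 < α a) (hα0 : 0 < α0) (x : Vm m) :
    0 < K0e A α a0 α0 x :=
  add_pos (covK_pos hA hα x) (pow_pos (f0e_pos hα0 x) 2)

theorem continuous_covK : Continuous fun x => covK A α x := by
  unfold covK
  exact continuous_finset_sum _ fun a _ => continuous_const.mul
    ((continuous_const.mul (innerSL ℝ a).continuous).rexp)

theorem continuous_wt (hA : A.Nonempty) (hα : ∀ a ∈ A, 0 < α a) (a : Vm m) :
    Continuous fun x => wt A α a x :=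
  (continuous_const.mul ((continuous_const.mul (innerSL ℝ a).continuous).rexp)).div
    continuous_covK (fun x => (covK_pos hA hα x).ne')

theorem continuous_mmap (hA : A.Nonempty) (hα : ∀ a ∈ A, 0 < α a) :
    Continuous fun x => mmap A α x := by
  unfold mmap
  exact continuous_finset_sum _ fun a _ => (continuous_wt hA hα a).smul continuous_const

theorem continuous_Gmat (hA : A.Nonempty) (hα : ∀ a ∈ A, 0 < α a) :
    Continuous fun x => Gmat A α x := by
  apply continuous_matrix
  intro i j
  apply continuous_finset_sum
  intro a _
  exact (continuous_wt hA hα a).mul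
    ((((EuclideanSpace.proj i).continuous.comp
        (continuous_const.sub (continuous_mmap hA hα)))).mul
      ((EuclideanSpace.proj j).continuous.comp
        (continuous_const.sub (continuous_mmap hA hα))))

theorem gmat_key (x : Vm m) (v : Fin m → ℝ) :
    dotProduct v ((Gmat A α x).mulVec v)
      = ∑ a ∈ A, wt A α a x * (∑ i, (a - mmap A α x) i * v i)^2 := by
  unfold Gmat
  simp only [dotProduct, Matrix.mulVec, Matrix.of_apply, Finset.sum_mul, Finset.mul_sum]
  rw [Finset.sum_comm]
  refine Eq.trans (Finset.sum_congr rfl fun y _ => Finset.sum_comm) ?_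
  refine Eq.trans Finset.sum_comm ?_
  refine Finset.sum_congr rfl fun a _ => ?_
  rw [sq, Finset.sum_mul_sum]
  simp only [Finset.mul_sum]
  refine Finset.sum_congr rfl fun i _ => Finset.sum_congr rfl fun j _ => by ring

theorem gmat_posDef (hA : A.Nonempty) (hα : ∀ a ∈ A, 0 < α a)
    (hspan : affineSpan ℝ (A : Set (Vm m)) = ⊤) (x : Vm m) :
    (Gmat A α x).PosDef := by
  refine Matrix.PosDef.of_dotProduct_mulVec_pos ?_ ?_
  · ext i j
    simp only [Matrix.conjTranspose_apply, Gmat, Matrix.of_apply, star_trivial]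
    exact Finset.sum_congr rfl fun a _ => by ring
  · intro v hv
    rw [star_trivial, gmat_key x v]
    have hnn : ∀ a ∈ A, 0 ≤ wt A α a x * (∑ i, (a - mmap A α x) i * v i)^2 :=
      fun a ha => mul_nonneg (wt_pos hA hα ha x).le (sq_nonneg _)
    rcases (Finset.sum_nonneg hnn).lt_or_eq with h | h
    · exact h
    · exfalso
      have hz : ∀ a ∈ A, wt A α a x * (∑ i, (a - mmap A α x) i * v i)^2 = 0 :=
        (Finset.sum_eq_zero_iff_of_nonneg hnn).mp h.symm
      set v' : Vm m := WithLp.toLp 2 v with hv'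
      have hall : ∀ a ∈ A, ⟪a - mmap A α x, v'⟫ = 0 := by
        intro a ha
        have := hz a ha
        have h2 : (∑ i, (a - mmap A α x) i * v i)^2 = 0 := by
          rcases mul_eq_zero.mp this with h' | h'
          · exact absurd h' (wt_pos hA hα ha x).ne'
          · exact h'
        rw [real_inner_sum_coords]
        exact pow_eq_zero_iff (n := 2) (by norm_num) |>.mp h2
      have hVtop : vectorSpan ℝ (A : Set (Vm m)) = ⊤ := by
        rw [← direction_affineSpan, hspan, AffineSubspace.direction_top]
      have hmem : v' ∈ (vectorSpan ℝ (A : Set (Vm m)))ᗮ := by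
        rw [Submodule.mem_orthogonal]
        intro u hu
        rw [vectorSpan_def] at hu
        induction hu using Submodule.span_induction with
        | mem u hu =>
            obtain ⟨a, ha, b, hb, rfl⟩ := Set.mem_vsub.mp hu
            have : (a : Vm m) -ᵥ b = (a - mmap A α x) - (b - mmap A α x) := by
              rw [vsub_eq_sub]; abel
            rw [this, inner_sub_left, hall a ha, hall b hb, sub_zero]
        | zero => simp
        | add u w _ _ hu hw => rw [inner_add_left, hu, hw, add_zero]
        | smul c u _ hu => rw [inner_smul_left, hu, mul_zero]
      rw [hVtop, Submodule.top_orthogonal_eq_bot, Submodule.mem_bot] at hmem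
      exact hv (by simpa [hv'] using congrArg WithLp.ofLp hmem)

theorem gmat_det_pos (hA : A.Nonempty) (hα : ∀ a ∈ A, 0 < α a)
    (hspan : affineSpan ℝ (A : Set (Vm m)) = ⊤) (x : Vm m) :
    0 < (Gmat A α x).det :=
  (gmat_posDef hA hα hspan x).det_pos

theorem continuous_qform (hA : A.Nonempty) (hα : ∀ a ∈ A, 0 < α a)
    (hspan : affineSpan ℝ (A : Set (Vm m)) = ⊤) :
    Continuous fun x => qform A α a0 x := by
  have heq : ∀ x : Vm m, qform A α a0 x =
      (Gmat A α x).det⁻¹ * dotProduct (fun i => (mmap A α x - a0) i)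
        ((Gmat A α x).adjugate.mulVec fun i => (mmap A α x - a0) i) := by
    intro x
    unfold qform
    rw [Matrix.inv_def, Ring.inverse_eq_inv', Matrix.smul_mulVec,
      dotProduct_smul, smul_eq_mul]
  simp only [heq, dotProduct, Matrix.mulVec]
  have hw : ∀ i, Continuous fun x => (mmap A α x - a0) i := fun i =>
    (EuclideanSpace.proj i).continuous.comp ((continuous_mmap hA hα).sub continuous_const)
  have hadj := (continuous_Gmat hA hα (α := α)).matrix_adjugate
  refine Continuous.mul (((continuous_Gmat hA hα).matrix_det).inv₀
    fun x => (gmat_det_pos hA hα hspan x).ne') ?_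
  exact continuous_finset_sum _ fun i _ => (hw i).mul
    (continuous_finset_sum _ fun j _ => (hadj.matrix_elem i j).mul (hw j))

theorem continuous_PsiF (hA : A.Nonempty) (hα : ∀ a ∈ A, 0 < α a) (hα0 : 0 < α0)
    (hspan : affineSpan ℝ (A : Set (Vm m)) = ⊤) :
    Continuous fun x => PsiF A α a0 α0 x := by
  have hf0 : Continuous fun x : Vm m => f0e a0 α0 x :=
    continuous_const.mul (innerSL ℝ a0).continuous.rexp
  have hK0 : Continuous fun x : Vm m => K0e A α a0 α0 x :=
    continuous_covK.add (hf0.pow 2)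
  have hK0ne : ∀ x : Vm m, K0e A α a0 α0 x ≠ 0 := fun x => (K0e_pos hA hα hα0 x).ne'
  unfold PsiF
  refine Continuous.mul ?_ ?_
  · exact (continuous_covK.div hK0 hK0ne).rpow_const fun x => Or.inr (by positivity)
  · exact (continuous_const.add (((hf0.pow 2).div hK0 hK0ne).mul
      (continuous_qform hA hα hspan))).sqrt

theorem hasFDerivAt_covK (x : Vm m) :
    HasFDerivAt (covK A α)
      (∑ a ∈ A, ((α a) ^ 2 * Real.exp (2 * ⟪a, x⟫) * 2) • (innerSL ℝ a)) x := by
  apply HasFDerivAt.fun_sum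
  intro a _
  have h1 : HasFDerivAt (fun x : Vm m => 2 * ⟪a, x⟫) ((2:ℝ) • innerSL ℝ a) x := by
    simpa using ((innerSL ℝ a).hasFDerivAt).const_mul (2:ℝ)
  have h3 := h1.exp.const_mul ((α a)^2)
  refine h3.congr_fderiv ?_
  ext v
  simp only [ContinuousLinearMap.smul_apply, smul_eq_mul]
  ring

theorem Phi0e_eq (hα0 : 0 < α0) : Phi0e A α a0 α0 =
    fun y => (1/2 : ℝ) * Real.log (covK A α y) - (Real.log α0 + ⟪a0, y⟫) := by
  funext y
  unfold Phi0e pot f0e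
  rw [Real.log_mul hα0.ne' (Real.exp_pos _).ne', Real.log_exp]

theorem hasFDerivAt_Phi0e (hA : A.Nonempty) (hα : ∀ a ∈ A, 0 < α a) (hα0 : 0 < α0) (x : Vm m) :
    HasFDerivAt (Phi0e A α a0 α0)
      ((∑ a ∈ A, wt A α a x • innerSL ℝ a) - innerSL ℝ a0) x := by
  have hKx := (covK_pos hA hα x).ne'
  have hlog : HasFDerivAt (fun y => (1/2 : ℝ) * Real.log (covK A α y))
      ((1/2 : ℝ) • ((covK A α x)⁻¹ •
        (∑ a ∈ A, ((α a) ^ 2 * Real.exp (2 * ⟪a, x⟫) * 2) • (innerSL ℝ a)))) x :=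
    ((hasFDerivAt_covK x).log hKx).const_mul _
  have hlin : HasFDerivAt (fun y : Vm m => Real.log α0 + ⟪a0, y⟫) (innerSL ℝ a0) x := by
    simpa using ((innerSL ℝ a0).hasFDerivAt.const_add (Real.log α0))
  rw [Phi0e_eq hα0]
  refine (hlog.sub hlin).congr_fderiv ?_
  ext v
  simp only [ContinuousLinearMap.sub_apply, ContinuousLinearMap.smul_apply,
    ContinuousLinearMap.sum_apply, smul_eq_mul, Finset.mul_sum]
  congr 1
  refine Finset.sum_congr rfl fun a _ => ?_
  unfold wt
  field_simp

theorem mmap_eq_a0_of_min (hA : A.Nonempty) (hα : ∀ a ∈ A, 0 < α a) (hα0 : 0 < α0)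
    {x : Vm m} (hx : ∀ y, Phi0e A α a0 α0 x ≤ Phi0e A α a0 α0 y) :
    mmap A α x = a0 := by
  have hmin : IsLocalMin (Phi0e A α a0 α0) x := Filter.Eventually.of_forall hx
  have hD := hasFDerivAt_Phi0e hA hα hα0 (a0 := a0) x
  have h0 : (∑ a ∈ A, wt A α a x • innerSL ℝ a) - innerSL ℝ a0 = 0 := by
    rw [← hD.fderiv]
    exact hmin.fderiv_eq_zero
  set u : Vm m := mmap A α x - a0 with hu
  have h1 : ⟪mmap A α x - a0, u⟫ = 0 := by
    have h2 := DFunLike.congr_fun h0 u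
    simp only [ContinuousLinearMap.sub_apply, ContinuousLinearMap.sum_apply,
      ContinuousLinearMap.smul_apply, ContinuousLinearMap.zero_apply, smul_eq_mul,
      innerSL_apply_apply] at h2
    rw [inner_sub_left]
    rw [show ⟪mmap A α x, u⟫ = ∑ a ∈ A, wt A α a x * ⟪a, u⟫ by
      unfold mmap; rw [sum_inner]; exact Finset.sum_congr rfl fun a _ => real_inner_smul_left _ _ _]
    linarith
  rw [← sub_eq_zero]
  exact inner_self_eq_zero.mp h1

theorem exists_min_Phi0e (hA : A.Nonempty) (hα : ∀ a ∈ A, 0 < α a) (hα0 : 0 < α0)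
    (ha0 : a0 ∈ interior (convexHull ℝ (A : Set (Vm m)))) :
    ∃ x, ∀ y, Phi0e A α a0 α0 x ≤ Phi0e A α a0 α0 y := by
  have hcont : Continuous (Phi0e A α a0 α0) := by
    rw [Phi0e_eq hα0]
    exact (continuous_const.mul (continuous_covK.log fun x => (covK_pos hA hα x).ne')).sub
      (continuous_const.add (innerSL ℝ a0).continuous)
  obtain ⟨ε, hε, hball⟩ : ∃ ε > 0, Metric.ball a0 ε ⊆ convexHull ℝ (A : Set (Vm m)) := by
    rw [mem_interior_iff_mem_nhds] at ha0
    exact Metric.mem_nhds_iff.mp ha0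
  set c : ℝ := (A.inf' hA fun a => Real.log (α a)) - Real.log α0 with hc
  have hbound : ∀ x, c + (ε/2) * ‖x‖ ≤ Phi0e A α a0 α0 x := by
    intro x
    obtain ⟨b, hbA, hb⟩ := A.exists_max_image (fun a => ⟪a, x⟫) hA
    have h1 : (α b)^2 * Real.exp (2*⟪b,x⟫) ≤ covK A α x :=
      Finset.single_le_sum (f := fun a => (α a)^2 * Real.exp (2*⟪a,x⟫))
        (fun a _ => mul_nonneg (sq_nonneg _) (Real.exp_pos _).le) hbA
    have hterm : (0:ℝ) < (α b)^2 * Real.exp (2*⟪b,x⟫) :=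
      mul_pos (pow_pos (hα b hbA) 2) (Real.exp_pos _)
    have h2 : Real.log (α b) + ⟪b,x⟫ ≤ pot A α x := by
      unfold pot
      have := Real.log_le_log hterm h1
      rw [Real.log_mul (pow_pos (hα b hbA) 2).ne' (Real.exp_pos _).ne',
        Real.log_exp, Real.log_pow] at this
      push_cast at this
      linarith
    have h3 : ⟪a0, x⟫ + (ε/2) * ‖x‖ ≤ ⟪b, x⟫ := by
      rcases eq_or_ne x 0 with rfl | hx0
      · simp
      · have hxn : (0:ℝ) < ‖x‖ := norm_pos_iff.mpr hx0
        set y : Vm m := a0 + ((ε/2) * ‖x‖⁻¹) • x with hy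
        have hymem : y ∈ convexHull ℝ (A : Set (Vm m)) := by
          apply hball
          rw [Metric.mem_ball, dist_eq_norm, hy]
          have : a0 + (ε/2 * ‖x‖⁻¹) • x - a0 = (ε/2 * ‖x‖⁻¹) • x := by abel
          rw [this, norm_smul]
          rw [Real.norm_eq_abs, abs_of_pos (by positivity)]
          rw [mul_assoc, inv_mul_cancel₀ hxn.ne', mul_one]
          linarith
        have hconv : Convex ℝ {z : Vm m | ⟪z, x⟫ ≤ ⟪b, x⟫} :=
          convex_halfSpace_le
            (⟨fun p q => inner_add_left p q x, fun r p => real_inner_smul_left p x r⟩ :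
              IsLinearMap ℝ fun z : Vm m => ⟪z, x⟫) _
        have hsub : (A : Set (Vm m)) ⊆ {z : Vm m | ⟪z, x⟫ ≤ ⟪b, x⟫} := fun a ha =>
          hb a (by exact_mod_cast ha)
        have hyb : ⟪y, x⟫ ≤ ⟪b, x⟫ := convexHull_min hsub hconv hymem
        rw [hy, inner_add_left, real_inner_smul_left,
          real_inner_self_eq_norm_mul_norm] at hyb
        have : ε/2 * ‖x‖⁻¹ * (‖x‖ * ‖x‖) = ε/2 * ‖x‖ := by
          field_simp
        rw [this] at hyb
        linarith
    have h4 : A.inf' hA (fun a => Real.log (α a)) ≤ Real.log (α b) :=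
      Finset.inf'_le _ hbA
    unfold Phi0e
    have hf0log : Real.log (f0e a0 α0 x) = Real.log α0 + ⟪a0, x⟫ := by
      unfold f0e
      rw [Real.log_mul hα0.ne' (Real.exp_pos _).ne', Real.log_exp]
    rw [hf0log]
    linarith
  have htend : Filter.Tendsto (Phi0e A α a0 α0) (Filter.cocompact (Vm m)) Filter.atTop := by
    refine Filter.tendsto_atTop_mono hbound ?_
    exact Filter.tendsto_atTop_add_const_left _ c
      (Filter.Tendsto.const_mul_atTop (by positivity) tendsto_norm_cocompact_atTop)
  exact hcont.exists_forall_le htend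


/-- If `a0` lies in the interior of the Newton polytope
`P = conv(A)`, then `U₋ = {x : Ψ(x) < 1}` is a nonempty open subset of `ℝ^m`. -/
theorem statement6 (m : ℕ) (hm : 1 ≤ m) (A : Finset (Vm m)) (hA : A.Nonempty)
    (α : Vm m → ℝ) (hα : ∀ a ∈ A, 0 < α a)
    (hspan : affineSpan ℝ (A : Set (Vm m)) = ⊤)
    (a0 : Vm m) (α0 : ℝ) (hα0 : 0 < α0)
    (ha0 : a0 ∈ interior (convexHull ℝ (A : Set (Vm m)))) :
    {x : Vm m | PsiF A α a0 α0 x < 1}.Nonempty ∧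
    IsOpen {x : Vm m | PsiF A α a0 α0 x < 1} := by
  constructor
  · obtain ⟨x, hx⟩ := exists_min_Phi0e hA hα hα0 ha0
    have hmu : mmap A α x = a0 := mmap_eq_a0_of_min hA hα hα0 hx
    refine ⟨x, ?_⟩
    have hq : qform A α a0 x = 0 := by
      have h0 : (fun i => (mmap A α x - a0) i) = (0 : Fin m → ℝ) := by
        funext i; rw [hmu]; simp
      unfold qform
      rw [h0]
      simp [dotProduct]
    have hK := covK_pos hA hα x
    have hK0 := K0e_pos hA hα hα0 (a0 := a0) x
    have hf := f0e_pos hα0 (a0 := a0) x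
    have hlt : covK A α x / K0e A α a0 α0 x < 1 := by
      rw [div_lt_one hK0]
      unfold K0e
      nlinarith
    have hratio : (covK A α x / K0e A α a0 α0 x) ^ ((m : ℝ) / 2) < 1 := by
      apply Real.rpow_lt_one (le_of_lt (div_pos hK hK0)) hlt
      positivity
    simp only [Set.mem_setOf_eq, PsiF, hq, mul_zero, add_zero, Real.sqrt_one, mul_one]
    exact hratio
  · have : {x : Vm m | PsiF A α a0 α0 x < 1} = (fun x => PsiF A α a0 α0 x) ⁻¹' Set.Iio 1 := rfl
    rw [this]
    exact isOpen_Iio.preimage (continuous_PsiF hA hα hα0 hspan)
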